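/- If every vertex of a feasible M-augmenting walk W in a capacitated graph G is covered by the c-matching M, then no set S of M-avoiding vertices (vertices not covered by M) can be removed to destroy W; consequently, if such a walk exists, the M-vertex-stabilizer instance [(G,w,c), M] is infeasible: no vertex-stabilizer preserving M exists, and ν_f^c(G \ S) > w(M) for every S ⊆ V avoiding M. -/

import Mathlib

variable {V : Type*}

/-- Degree of a vertex with respect to an edge set. -/
def degOn [DecidableEq V] (M : Finset (Sym2 V)) (v : V) : ℕ :=
  (M.filter (fun e => v ∈ e)).card

/-- Total weight of an edge set. -/
def wsum (w : Sym2 V → ℝ) (M : Finset (Sym2 V)) : ℝ := ∑ e ∈ M, w e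

/-- A `c`-matching: a set of edges of `G` with every vertex degree at most its capacity. -/
def IsCMatching [DecidableEq V] (G : SimpleGraph V) (c : V → ℕ) (M : Finset (Sym2 V)) : Prop :=
  (∀ e ∈ M, e ∈ G.edgeSet) ∧ ∀ v, degOn M v ≤ c v

/-- A maximum-weight `c`-matching. -/
def IsMaxCMatching [DecidableEq V] (G : SimpleGraph V) (w : Sym2 V → ℝ) (c : V → ℕ)
    (M : Finset (Sym2 V)) : Prop :=
  IsCMatching G c M ∧ ∀ N, IsCMatching G c N → wsum w N ≤ wsum w M

/-- A list of edges is `M`-alternating if consecutive edges alternate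
between `M` and its complement. -/
def Alternating [DecidableEq V] (M : Finset (Sym2 V)) (l : List (Sym2 V)) : Prop :=
  l.Chain' (fun e f => (e ∈ M ↔ f ∉ M))

/-- Weight (with multiplicity) of the matched edges of a list. -/
def matchedWeight [DecidableEq V] (w : Sym2 V → ℝ) (M : Finset (Sym2 V))
    (l : List (Sym2 V)) : ℝ :=
  ((l.filter (fun e => decide (e ∈ M))).map w).sum

/-- Weight (with multiplicity) of the unmatched edges of a list. -/
def unmatchedWeight [DecidableEq V] (w : Sym2 V → ℝ) (M : Finset (Sym2 V))
    (l : List (Sym2 V)) : ℝ :=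
  ((l.filter (fun e => decide (e ∉ M))).map w).sum

/-- `M`-augmenting: `w(l \ M) > w(l ∩ M)` (multiplicities counted). -/
def Augmenting [DecidableEq V] (w : Sym2 V → ℝ) (M : Finset (Sym2 V)) (l : List (Sym2 V)) : Prop :=
  matchedWeight w M l < unmatchedWeight w M l

/-- Fractional degree `Σ_{e ∈ δ(v)} x_e`. -/
def lpDeg [Fintype V] [DecidableEq V] (x : Sym2 V → ℝ) (v : V) : ℝ :=
  ∑ e : Sym2 V, if v ∈ e then x e else 0

/-- A fractional `c`-matching. -/
def IsFracCMatching [Fintype V] [DecidableEq V] (G : SimpleGraph V) (c : V → ℕ)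
    (x : Sym2 V → ℝ) : Prop :=
  (∀ e, 0 ≤ x e ∧ x e ≤ 1) ∧ (∀ e, e ∉ G.edgeSet → x e = 0) ∧ ∀ v, lpDeg x v ≤ (c v : ℝ)

/-- LP objective value `w^T x`. -/
def lpVal [Fintype V] (w x : Sym2 V → ℝ) : ℝ := ∑ e : Sym2 V, w e * x e

/-- `ν^c(G)`: maximum weight of a `c`-matching. -/
noncomputable def nuC [Fintype V] [DecidableEq V] (G : SimpleGraph V) (w : Sym2 V → ℝ)
    (c : V → ℕ) : ℝ :=
  sSup {r | ∃ M, IsCMatching G c M ∧ r = wsum w M}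

/-- `ν_f^c(G)`: optimum of the fractional `c`-matching LP. -/
noncomputable def nuF [Fintype V] [DecidableEq V] (G : SimpleGraph V) (w : Sym2 V → ℝ)
    (c : V → ℕ) : ℝ :=
  sSup {r | ∃ x, IsFracCMatching G c x ∧ r = lpVal w x}

/-- A capacitated graph is stable if `ν^c(G) = ν_f^c(G)`. -/
def Stable [Fintype V] [DecidableEq V] (G : SimpleGraph V) (w : Sym2 V → ℝ) (c : V → ℕ) : Prop :=
  nuC G w c = nuF G w c

/-- The ε-augmentation `x^{M/W}(ε)` of a walk. -/
def epsAug [DecidableEq V] {G : SimpleGraph V} {u v : V} (M : Finset (Sym2 V))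
    (p : G.Walk u v) (ε : ℝ) : Sym2 V → ℝ :=
  fun e => if e ∈ M then 1 - (p.edges.count e : ℝ) * ε else (p.edges.count e : ℝ) * ε

/-- Symmetric difference of edge sets. -/
def symmDiffE [DecidableEq V] (M T : Finset (Sym2 V)) : Finset (Sym2 V) := (M \ T) ∪ (T \ M)

/-- The graph obtained from `G` by deleting the vertices of `S` (keeping the vertex type). -/
def delVerts [DecidableEq V] (G : SimpleGraph V) (S : Finset V) : SimpleGraph V :=
  SimpleGraph.fromRel (fun u v => G.Adj u v ∧ u ∉ S ∧ v ∉ S)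

lemma sum_filter_map_count [Fintype V] [DecidableEq V] (w : Sym2 V → ℝ)
    (P : Sym2 V → Prop) [DecidablePred P] (l : List (Sym2 V)) :
    ((l.filter (fun e => decide (P e))).map w).sum
      = ∑ e : Sym2 V, if P e then (l.count e : ℝ) * w e else 0 := by
  induction l with
  | nil => simp
  | cons a l ih =>
    have hR : ∀ e : Sym2 V, (if P e then (((a :: l).count e : ℕ) : ℝ) * w e else 0)
        = (if P e then (l.count e : ℝ) * w e else 0)
          + (if e = a then (if P a then w a else 0) else 0) := by
      intro e
      rcases eq_or_ne e a with rfl | h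
      · rw [List.count_cons_self]; push_cast; split_ifs <;> simp_all <;> ring
      · rw [List.count_cons_of_ne h.symm]; simp [h]
    simp only [hR, Finset.sum_add_distrib, Finset.sum_ite_eq' Finset.univ a,
      Finset.mem_univ, if_true]
    by_cases hP : P a
    · rw [List.filter_cons, if_pos (by simpa using hP), List.map_cons, List.sum_cons, ih,
        if_pos hP]
      ring
    · rw [List.filter_cons, if_neg (by simpa using hP), ih, if_neg hP, add_zero]

lemma matchedWeight_eq [Fintype V] [DecidableEq V] (w : Sym2 V → ℝ) (M : Finset (Sym2 V))
    (l : List (Sym2 V)) :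
    matchedWeight w M l = ∑ e : Sym2 V, if e ∈ M then (l.count e : ℝ) * w e else 0 :=
  sum_filter_map_count w (fun e => e ∈ M) l

lemma unmatchedWeight_eq [Fintype V] [DecidableEq V] (w : Sym2 V → ℝ) (M : Finset (Sym2 V))
    (l : List (Sym2 V)) :
    unmatchedWeight w M l = ∑ e : Sym2 V, if e ∉ M then (l.count e : ℝ) * w e else 0 :=
  sum_filter_map_count w (fun e => e ∉ M) l

lemma lpVal_epsAug [Fintype V] [DecidableEq V] {G : SimpleGraph V} {a b : V}
    (w : Sym2 V → ℝ) (M : Finset (Sym2 V)) (p : G.Walk a b) (ε : ℝ) :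
    lpVal w (epsAug M p ε)
      = wsum w M + ε * (unmatchedWeight w M p.edges - matchedWeight w M p.edges) := by
  have hws : wsum w M = ∑ e : Sym2 V, if e ∈ M then w e else 0 := by
    rw [Finset.sum_ite_mem, Finset.univ_inter, wsum]
  rw [matchedWeight_eq, unmatchedWeight_eq, hws, lpVal, ← Finset.sum_sub_distrib,
    Finset.mul_sum, ← Finset.sum_add_distrib]
  refine Finset.sum_congr rfl fun e _ => ?_
  simp only [epsAug]
  split_ifs <;> ring

lemma mem_delVerts_edgeSet [Fintype V] [DecidableEq V] {G : SimpleGraph V} {S : Finset V}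
    {e : Sym2 V} (he : e ∈ G.edgeSet) (hS : ∀ v ∈ e, v ∉ S) :
    e ∈ (delVerts G S).edgeSet := by
  induction e with
  | _ u v =>
    rw [SimpleGraph.mem_edgeSet] at he ⊢
    rw [delVerts, SimpleGraph.fromRel_adj]
    exact ⟨he.ne, Or.inl ⟨he, hS u (by simp), hS v (by simp)⟩⟩

/-- if every vertex of a feasible `M`-augmenting walk `W` is `M`-covered, then
removing any set `S` of `M`-exposed vertices leaves `ν_f^c(G \ S) > w(M)`; consequently the
`M`-vertex-stabilizer instance `[(G, w, c), M]` is infeasible: there is no `S` of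
`M`-exposed vertices such that `M` is maximum-weight in `G \ S` and `G \ S` is stable. -/
theorem stmt17 [Fintype V] [DecidableEq V] (G : SimpleGraph V) (w : Sym2 V → ℝ)
    (hw : ∀ e, 0 ≤ w e) (c : V → ℕ) (M : Finset (Sym2 V)) (hM : IsCMatching G c M)
    {a b : V} (p : G.Walk a b)
    (halt : Alternating M p.edges) (haug : Augmenting w M p.edges)
    (hfeas : ∃ ε > (0 : ℝ), IsFracCMatching G c (epsAug M p ε))
    (hcov : ∀ v ∈ p.support, 0 < degOn M v) :
    (∀ S : Finset V, (∀ v ∈ S, degOn M v = 0) → wsum w M < nuF (delVerts G S) w c) ∧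
      ¬ ∃ S : Finset V, (∀ v ∈ S, degOn M v = 0) ∧
          IsMaxCMatching (delVerts G S) w c M ∧ Stable (delVerts G S) w c := by

  obtain ⟨ε, hε, hx⟩ := hfeas
  have hMcov : ∀ e ∈ M, ∀ v ∈ e, 0 < degOn M v := by
    intro e heM v hv
    rw [degOn, Finset.card_pos]
    exact ⟨e, Finset.mem_filter.mpr ⟨heM, hv⟩⟩
  have main : ∀ S : Finset V, (∀ v ∈ S, degOn M v = 0) →
      wsum w M < nuF (delVerts G S) w c := by
    intro S hS
    have hnotS : ∀ v, 0 < degOn M v → v ∉ S := by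
      intro v hv hvS
      rw [hS v hvS] at hv
      exact lt_irrefl 0 hv
    have hfrac : IsFracCMatching (delVerts G S) c (epsAug M p ε) := by
      refine ⟨hx.1, ?_, hx.2.2⟩
      intro e he
      by_cases heM : e ∈ M
      · exact absurd (mem_delVerts_edgeSet (hM.1 e heM)
          (fun v hv => hnotS v (hMcov e heM v hv))) he
      · by_cases hep : e ∈ p.edges
        · have heG : e ∈ G.edgeSet := p.edges_subset_edgeSet hep
          have : e ∈ (delVerts G S).edgeSet := by
            refine mem_delVerts_edgeSet heG fun v hv => hnotS v (hcov v ?_)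
            induction e with
            | _ x y =>
              rcases Sym2.mem_iff.mp hv with rfl | rfl
              · exact p.fst_mem_support_of_mem_edges hep
              · exact p.snd_mem_support_of_mem_edges hep
          exact absurd this he
        · simp [epsAug, heM, List.count_eq_zero_of_not_mem hep]
    have hbdd : BddAbove {r | ∃ x, IsFracCMatching (delVerts G S) c x ∧ r = lpVal w x} := by
      refine ⟨∑ e : Sym2 V, w e, ?_⟩
      rintro r ⟨x, hx', rfl⟩
      exact Finset.sum_le_sum fun e _ =>
        (mul_le_of_le_one_right (hw e) (hx'.1 e).2).trans_eq (by ring_nf)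
    have hle : lpVal w (epsAug M p ε) ≤ nuF (delVerts G S) w c :=
      le_csSup hbdd ⟨_, hfrac, rfl⟩
    have hgt : wsum w M < lpVal w (epsAug M p ε) := by
      rw [lpVal_epsAug]
      have := haug
      rw [Augmenting] at this
      nlinarith
    exact hgt.trans_le hle
  refine ⟨main, ?_⟩
  rintro ⟨S, hS, hmax, hstab⟩
  have h1 := main S hS
  have h2 : nuC (delVerts G S) w c ≤ wsum w M := by
    refine csSup_le ⟨wsum w M, M, hmax.1, rfl⟩ ?_
    rintro r ⟨N, hN, rfl⟩
    exact hmax.2 N hN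
  rw [Stable] at hstab
  linarith
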